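/- If N₁ and N₂ are norms on ℝⁿ and N = N₁ + N₂, then the dual unit ball of N equals the Minkowski sum of the dual unit balls of N₁ and N₂. -/

import Mathlib

open Pointwise

/-- The dual unit ball of a sum of two norms is the Minkowski sum of the two
dual unit balls. -/
theorem dual_ball_of_sum_eq_minkowski_sum (n : ℕ)
    (N₁ N₂ : (Fin n → ℝ) → ℝ)
    (h₁ : ∀ x, 0 ≤ N₁ x) (h₁hom : ∀ (t : ℝ) x, N₁ (t • x) = |t| * N₁ x)
    (h₁add : ∀ x y, N₁ (x + y) ≤ N₁ x + N₁ y) (h₁def : ∀ x, N₁ x = 0 → x = 0)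
    (h₂ : ∀ x, 0 ≤ N₂ x) (h₂hom : ∀ (t : ℝ) x, N₂ (t • x) = |t| * N₂ x)
    (h₂add : ∀ x y, N₂ (x + y) ≤ N₂ x + N₂ y) (h₂def : ∀ x, N₂ x = 0 → x = 0) :
    {φ : (Fin n → ℝ) →ₗ[ℝ] ℝ | ∀ x, φ x ≤ N₁ x + N₂ x} =
      {φ : (Fin n → ℝ) →ₗ[ℝ] ℝ | ∀ x, φ x ≤ N₁ x} +
        {φ : (Fin n → ℝ) →ₗ[ℝ] ℝ | ∀ x, φ x ≤ N₂ x} := by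
  have hN₁0 : N₁ 0 = 0 := by
    have := h₁hom 0 0; simpa using this
  have hN₂0 : N₂ 0 = 0 := by
    have := h₂hom 0 0; simpa using this
  ext φ
  constructor
  · intro hφ
    set E := (Fin n → ℝ) × (Fin n → ℝ)
    set p : E → ℝ := fun z => N₁ z.1 + N₂ z.2 with hp
    set diag : (Fin n → ℝ) →ₗ[ℝ] E := LinearMap.prod LinearMap.id LinearMap.id
    set S : Submodule ℝ E := LinearMap.range diag
    set f : E →ₗ.[ℝ] ℝ := (φ.comp (LinearMap.fst ℝ _ _)).toPMap S with hf
    have hfle : ∀ x : f.domain, f x ≤ p x := by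
      rintro ⟨z, hz⟩
      obtain ⟨a, ha⟩ := hz
      have : z = (a, a) := ha.symm
      subst this
      simpa [E, f, p, LinearMap.toPMap_apply, LinearMap.fst_apply] using hφ a
    obtain ⟨g, hg, hgle⟩ := exists_extension_of_le_sublinear f p
      (fun c hc z => by
        show N₁ (c • z.1) + N₂ (c • z.2) = c * (N₁ z.1 + N₂ z.2)
        rw [h₁hom, h₂hom, abs_of_pos hc]; ring)
      (fun z w => by
        simpa [E, p, add_add_add_comm, Prod.fst_add, Prod.snd_add] using add_le_add (h₁add z.1 w.1) (h₂add z.2 w.2))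
      hfle
    refine Set.mem_add.mpr ⟨g.comp (LinearMap.inl ℝ _ _), ?_, g.comp (LinearMap.inr ℝ _ _), ?_, ?_⟩
    · intro x
      have := hgle (x, 0)
      simpa [E, p, hN₂0, LinearMap.inl_apply] using this
    · intro x
      have := hgle (0, x)
      simpa [E, p, hN₁0, LinearMap.inr_apply] using this
    · refine LinearMap.ext fun x => ?_
      have hx : ((x, x) : E) ∈ S := ⟨x, rfl⟩
      have := hg ⟨(x, x), hx⟩
      have h2 : g (x, x) = φ x := by
        simpa [E, f, LinearMap.toPMap_apply, LinearMap.fst_apply] using this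
      have hsplit : ((x, x) : E) = (x, 0) + (0, x) := by simp [Prod.ext_iff]
      calc g (x, 0) + g (0, x) = g ((x, 0) + (0, x)) := (map_add g _ _).symm
        _ = g (x, x) := by rw [← hsplit]
        _ = φ x := h2
  · intro hmem
    obtain ⟨φ₁, hφ₁, φ₂, hφ₂, rfl⟩ := Set.mem_add.mp hmem
    intro x
    exact add_le_add (hφ₁ x) (hφ₂ x)
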